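/- The influence function σ(·, T) defined by σ(A,T) = E[|{i ∈ V : min_{s∈A} d_τ(s,i) ≤ T}|] is submodular: for all A ⊆ B ⊆ V and v ∉ B, σ(A ∪ {v}, T) - σ(A, T) ≥ σ(B ∪ {v}, T) - σ(B, T). -/

import Mathlib

open MeasureTheory
open scoped ENNReal NNReal

/-- `p` is a directed path from `s` to `i` in the graph with edge relation `E`. -/
def IsPath {V : Type*} (E : V → V → Prop) (s i : V) (p : List V) : Prop :=
  p.head? = some s ∧ p.getLast? = some i ∧ p.Chain' E

/-- Total weight of a path. -/
noncomputable def pathWeight {V : Type*} (τ : V → V → ℝ≥0∞) (p : List V) : ℝ≥0∞ :=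
  ((p.zip p.tail).map fun e => τ e.1 e.2).sum

/-- Shortest-path distance from `s` to `i`. -/
noncomputable def spDist {V : Type*} (E : V → V → Prop) (τ : V → V → ℝ≥0∞)
    (s i : V) : ℝ≥0∞ :=
  ⨅ (p : List V) (_ : IsPath E s i p), pathWeight τ p

/-- Influence: expected number of nodes within shortest-path distance `T` of
the source set `A`, under random nonnegative edge weights `τ`. -/
noncomputable def influence {V : Type*} [Fintype V] {Ω : Type*}
    [MeasurableSpace Ω] (μ : Measure Ω) (E : V → V → Prop)
    (τ : Ω → V → V → ℝ≥0∞) (A : Finset V) (T : ℝ≥0) : ℝ :=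
  ∫ ω, ((Finset.univ.filter fun i : V =>
      (⨅ s ∈ A, spDist E (τ ω) s i) ≤ (T : ℝ≥0∞)).card : ℝ) ∂μ

section Pointwise
variable {V : Type*} [Fintype V] [DecidableEq V]

/-- The set of nodes within distance `T` of the source set `C`, for fixed weights. -/
noncomputable def covSet (E : V → V → Prop) (w : V → V → ℝ≥0∞) (T : ℝ≥0) (C : Finset V) :
    Finset V := Finset.univ.filter fun i : V => (⨅ s ∈ C, spDist E w s i) ≤ (T : ℝ≥0∞)

lemma covSet_insert (E : V → V → Prop) (w : V → V → ℝ≥0∞) (T : ℝ≥0) (C : Finset V) (v : V) :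
    covSet E w T (insert v C) = covSet E w T C ∪
      (Finset.univ.filter fun i : V => spDist E w v i ≤ (T : ℝ≥0∞)) := by
  ext i
  simp only [covSet, Finset.mem_filter, Finset.mem_union, Finset.mem_univ, true_and,
    Finset.iInf_insert, inf_le_iff]
  tauto

omit [DecidableEq V] in
lemma covSet_mono (E : V → V → Prop) (w : V → V → ℝ≥0∞) (T : ℝ≥0) {A B : Finset V}
    (h : A ⊆ B) : covSet E w T A ⊆ covSet E w T B := by
  intro i hi
  simp only [covSet, Finset.mem_filter, Finset.mem_univ, true_and] at hi ⊢
  exact le_trans (le_iInf fun s => le_iInf fun hs => iInf₂_le s (h hs)) hi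

lemma covSet_submodular (E : V → V → Prop) (w : V → V → ℝ≥0∞) (T : ℝ≥0) {A B : Finset V}
    (h : A ⊆ B) (v : V) :
    (covSet E w T (insert v B)).card + (covSet E w T A).card ≤
      (covSet E w T (insert v A)).card + (covSet E w T B).card := by
  set N := Finset.univ.filter fun i : V => spDist E w v i ≤ (T : ℝ≥0∞) with hN
  rw [covSet_insert, covSet_insert]
  have hsub : covSet E w T B ∪ N ⊆ covSet E w T B ∪ (N \ covSet E w T A) := by
    intro i hi
    rcases Finset.mem_union.1 hi with h1 | h1
    · exact Finset.mem_union_left _ h1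
    · by_cases h2 : i ∈ covSet E w T A
      · exact Finset.mem_union_left _ (covSet_mono E w T h h2)
      · exact Finset.mem_union_right _ (Finset.mem_sdiff.2 ⟨h1, h2⟩)
  calc (covSet E w T B ∪ N).card + (covSet E w T A).card
      ≤ ((covSet E w T B).card + (N \ covSet E w T A).card) + (covSet E w T A).card :=
        Nat.add_le_add_right (le_trans (Finset.card_le_card hsub) (Finset.card_union_le _ _)) _
    _ = (covSet E w T A ∪ N).card + (covSet E w T B).card := by
        rw [← Finset.union_sdiff_self_eq_union, Finset.card_union_of_disjoint
          Finset.sdiff_disjoint.symm]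
        ring

end Pointwise

/-- The influence function is submodular: for `A ⊆ B` and `v ∉ B`,
`σ(A ∪ {v}, T) - σ(A, T) ≥ σ(B ∪ {v}, T) - σ(B, T)`. -/
theorem influence_submodular
    {V : Type*} [Fintype V] [DecidableEq V] {Ω : Type*} [MeasurableSpace Ω]
    (μ : Measure Ω) [IsProbabilityMeasure μ]
    (E : V → V → Prop) (τ : Ω → V → V → ℝ≥0∞) (T : ℝ≥0)
    (hint : ∀ A : Finset V, Integrable (fun ω =>
      ((Finset.univ.filter fun i : V =>
        (⨅ s ∈ A, spDist E (τ ω) s i) ≤ (T : ℝ≥0∞)).card : ℝ)) μ)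
    (A B : Finset V) (hAB : A ⊆ B) (v : V) (hv : v ∉ B) :
    influence μ E τ (insert v B) T - influence μ E τ B T
      ≤ influence μ E τ (insert v A) T - influence μ E τ A T := by
  have key : (fun ω => ((Finset.univ.filter fun i : V =>
        (⨅ s ∈ insert v B, spDist E (τ ω) s i) ≤ (T : ℝ≥0∞)).card : ℝ)
        + ((Finset.univ.filter fun i : V =>
        (⨅ s ∈ A, spDist E (τ ω) s i) ≤ (T : ℝ≥0∞)).card : ℝ))
      ≤ (fun ω => ((Finset.univ.filter fun i : V =>
        (⨅ s ∈ insert v A, spDist E (τ ω) s i) ≤ (T : ℝ≥0∞)).card : ℝ)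
        + ((Finset.univ.filter fun i : V =>
        (⨅ s ∈ B, spDist E (τ ω) s i) ≤ (T : ℝ≥0∞)).card : ℝ)) := by
    intro ω
    have := covSet_submodular E (τ ω) T hAB v
    simp only [covSet] at this
    push_cast
    exact_mod_cast this
  have hmono := integral_mono ((hint (insert v B)).add (hint A))
    ((hint (insert v A)).add (hint B)) key
  simp only [Pi.add_apply] at hmono
  rw [integral_add (hint (insert v B)) (hint A),
    integral_add (hint (insert v A)) (hint B)] at hmono
  simp only [influence]
  linarith
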